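/- Let A ⊆ ℝ be an open invex set with respect to η : A × A → ℝ and suppose f : A → ℝ is a differentiable function. Let p ∈ ℝ with p > 1. If |f′|^{p/(p−1)} is preinvex with respect to η on A, then for every a, b ∈ A with a < a + η(b,a): | (f(a) + f(a+η(b,a)))/2 − (1/η(b,a)) · ∫_a^{a+η(b,a)} f(x) dx | ≤ (|η(b,a)| / (2(p+1)^{1/p})) · (max{|f′(a)|^{p/(p−1)}, |f′(b)|^{p/(p−1)}})^{(p−1)/p}. -/

import Mathlib

open Real MeasureTheory Set

/-- Hermite–Hadamard type inequality (Barani et al.) for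
differentiable functions with `|f'|^{p/(p-1)}` preinvex, `p > 1`. -/
theorem preinvex_deriv_pow_HH
    (A : Set ℝ) (η : ℝ → ℝ → ℝ) (f f' : ℝ → ℝ) (p : ℝ)
    (hA : IsOpen A)
    (hinv : ∀ x ∈ A, ∀ y ∈ A, ∀ t ∈ Icc (0:ℝ) 1, x + t * η y x ∈ A)
    (hder : ∀ x ∈ A, HasDerivAt f (f' x) x)
    (hp : 1 < p)
    (hpre : ∀ x ∈ A, ∀ y ∈ A, ∀ t ∈ Icc (0:ℝ) 1,
      |f' (x + t * η y x)| ^ (p / (p - 1))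
        ≤ (1 - t) * |f' x| ^ (p / (p - 1)) + t * |f' y| ^ (p / (p - 1))) :
    ∀ a ∈ A, ∀ b ∈ A, a < a + η b a →
      |(f a + f (a + η b a)) / 2 - (1 / η b a) * ∫ x in a..(a + η b a), f x|
        ≤ |η b a| / (2 * (p + 1) ^ (1 / p)) *
            (max (|f' a| ^ (p / (p - 1))) (|f' b| ^ (p / (p - 1)))) ^ ((p - 1) / p) := by
  intro a ha b hb hab
  have hp0 : (0:ℝ) < p := by linarith
  have hp1 : (0:ℝ) < p - 1 := by linarith
  set T := η b a with hTdef
  have hT0 : 0 < T := by linarith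
  set c := a + T with hcdef
  have hac : a ≤ c := hab.le
  set q := p / (p - 1) with hqdef
  have hq0 : 0 < q := div_pos hp0 hp1
  set M := max (|f' a| ^ q) (|f' b| ^ q) with hMdef
  have hM0 : 0 ≤ M := le_max_of_le_left (Real.rpow_nonneg (abs_nonneg _) _)
  set K := M ^ ((p - 1) / p) with hKdef
  have hK0 : 0 ≤ K := Real.rpow_nonneg hM0 _
  -- membership of the segment in A
  have hmem : ∀ x ∈ Icc a c, x ∈ A := by
    intro x hx
    have ht : (x - a) / T ∈ Icc (0:ℝ) 1 :=
      ⟨div_nonneg (by linarith [hx.1]) hT0.le, (div_le_one hT0).2 (by linarith [hx.2])⟩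
    have h1 := hinv a ha b hb _ ht
    have hx' : a + (x - a) / T * T = x := by field_simp; ring
    rwa [hx'] at h1
  -- pointwise bound |f' x| ≤ K on [a,c]
  have hbound : ∀ x ∈ Icc a c, |f' x| ≤ K := by
    intro x hx
    have ht : (x - a) / T ∈ Icc (0:ℝ) 1 :=
      ⟨div_nonneg (by linarith [hx.1]) hT0.le, (div_le_one hT0).2 (by linarith [hx.2])⟩
    have h1 := hpre a ha b hb _ ht
    have hx' : a + (x - a) / T * T = x := by field_simp; ring
    rw [hx'] at h1
    have h2 : |f' x| ^ q ≤ M := by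
      have hl : |f' a| ^ q ≤ M := le_max_left _ _
      have hr : |f' b| ^ q ≤ M := le_max_right _ _
      have h0 := ht.1
      have h1' := ht.2
      nlinarith
    have h3 := Real.rpow_le_rpow (Real.rpow_nonneg (abs_nonneg _) _) h2
      (by positivity : (0:ℝ) ≤ (p - 1) / p)
    rw [← Real.rpow_mul (abs_nonneg _)] at h3
    have hq1 : q * ((p - 1) / p) = 1 := by
      rw [hqdef]; field_simp
    rwa [hq1, Real.rpow_one] at h3
  -- integrability of f'
  have hint_f' : IntervalIntegrable f' volume a c := by
    rw [intervalIntegrable_iff_integrableOn_Icc_of_le hac]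
    have hd : IntegrableOn (deriv f) (Icc a c) := by
      apply Measure.integrableOn_of_bounded (M := K) measure_Icc_lt_top.ne
        (measurable_deriv f).aestronglyMeasurable
      rw [ae_restrict_iff' measurableSet_Icc]
      refine ae_of_all _ fun x hx => ?_
      have : deriv f x = f' x := (hder x (hmem x hx)).deriv
      rw [Real.norm_eq_abs, this]
      exact hbound x hx
    exact hd.congr_fun (fun x hx => (hder x (hmem x hx)).deriv) measurableSet_Icc
  -- integrability of f
  have hcont : ContinuousOn f (Icc a c) := fun x hx =>
    ((hder x (hmem x hx)).continuousAt).continuousWithinAt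
  have hint_f : IntervalIntegrable f volume a c := hcont.intervalIntegrable_of_Icc hac
  have huIcc : uIcc a c = Icc a c := uIcc_of_le hac
  -- integration by parts
  have hparts : ∫ x in a..c, ((a+c)/2 - x) * f' x
      = ((a+c)/2 - c) * f c - ((a+c)/2 - a) * f a - ∫ x in a..c, (-1) * f x :=
    intervalIntegral.integral_mul_deriv_eq_deriv_mul
      (fun x _ => (hasDerivAt_id x).const_sub ((a+c)/2))
      (fun x hx => hder x (hmem x (huIcc ▸ hx)))
      intervalIntegrable_const hint_f'
  have hnegint : ∫ x in a..c, (-1 : ℝ) * f x = - ∫ x in a..c, f x := by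
    simp
  -- the identity
  have hId : (f a + f c) / 2 - (1 / T) * ∫ x in a..c, f x
      = -(1 / T) * ∫ x in a..c, ((a+c)/2 - x) * f' x := by
    rw [hparts, hnegint, hcdef]
    field_simp
    ring
  -- bound the weighted integral
  have hu_cont : ContinuousOn (fun x => (a+c)/2 - x) (uIcc a c) :=
    (continuous_const.sub continuous_id).continuousOn
  have hint_uf' : IntervalIntegrable (fun x => ((a+c)/2 - x) * f' x) volume a c :=
    hint_f'.continuousOn_mul hu_cont
  have habs1 : |∫ x in a..c, ((a+c)/2 - x) * f' x|
      ≤ ∫ x in a..c, |((a+c)/2 - x) * f' x| :=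
    intervalIntegral.abs_integral_le_integral_abs hac
  have habs2 : ∫ x in a..c, |((a+c)/2 - x) * f' x|
      ≤ ∫ x in a..c, K * |(a+c)/2 - x| := by
    apply intervalIntegral.integral_mono_on hac hint_uf'.abs
      ((continuous_const.mul (continuous_const.sub continuous_id).abs).intervalIntegrable a c)
    intro x hx
    rw [abs_mul, mul_comm]
    exact mul_le_mul_of_nonneg_right (hbound x hx) (abs_nonneg _)
  -- compute ∫ |m - x|
  have hm : a ≤ (a+c)/2 ∧ (a+c)/2 ≤ c := ⟨by linarith, by linarith⟩
  have hpiece1 : ∫ x in a..(a+c)/2, |(a+c)/2 - x| = ∫ x in a..(a+c)/2, ((a+c)/2 - x) := by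
    apply intervalIntegral.integral_congr
    intro x hx
    rw [uIcc_of_le hm.1] at hx
    exact abs_of_nonneg (by linarith [hx.2])
  have hpiece2 : ∫ x in ((a+c)/2)..c, |(a+c)/2 - x| = ∫ x in ((a+c)/2)..c, (x - (a+c)/2) := by
    apply intervalIntegral.integral_congr
    intro x hx
    rw [uIcc_of_le hm.2] at hx
    show |(a+c)/2 - x| = x - (a+c)/2
    rw [abs_sub_comm]
    exact abs_of_nonneg (by linarith [hx.1])
  have hval1 : ∫ x in a..(a+c)/2, ((a+c)/2 - x) = (c - a)^2 / 8 := by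
    rw [intervalIntegral.integral_sub intervalIntegrable_const intervalIntegral.intervalIntegrable_id,
      intervalIntegral.integral_const, integral_id]
    simp only [smul_eq_mul]
    ring
  have hval2 : ∫ x in ((a+c)/2)..c, (x - (a+c)/2) = (c - a)^2 / 8 := by
    rw [intervalIntegral.integral_sub intervalIntegral.intervalIntegrable_id intervalIntegrable_const,
      intervalIntegral.integral_const, integral_id]
    simp only [smul_eq_mul]
    ring
  have hsplit : (∫ x in a..(a+c)/2, |(a+c)/2 - x|) + ∫ x in ((a+c)/2)..c, |(a+c)/2 - x|
      = ∫ x in a..c, |(a+c)/2 - x| := by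
    apply intervalIntegral.integral_add_adjacent_intervals <;>
      exact ((continuous_const.sub continuous_id).abs.intervalIntegrable _ _)
  have hval : ∫ x in a..c, |(a+c)/2 - x| = (c - a)^2 / 4 := by
    rw [← hsplit, hpiece1, hpiece2, hval1, hval2]; ring
  have hca : c - a = T := by rw [hcdef]; ring
  have habs3 : ∫ x in a..c, K * |(a+c)/2 - x| = K * (T^2 / 4) := by
    rw [intervalIntegral.integral_const_mul, hval, hca]
  -- Bernoulli: (p+1)^(1/p) ≤ 2
  have h2p : (p + 1 : ℝ) ≤ 2 ^ p := by
    have h := one_add_mul_self_le_rpow_one_add (s := (1:ℝ)) (by norm_num) hp.le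
    norm_num at h
    linarith
  have hpow_pos : (0:ℝ) < (p + 1) ^ (1/p) := Real.rpow_pos_of_pos (by linarith) _
  have hple : (p + 1 : ℝ) ^ (1/p) ≤ 2 := by
    calc (p + 1 : ℝ) ^ (1/p) ≤ (2 ^ p) ^ (1/p) :=
          Real.rpow_le_rpow (by linarith) h2p (by positivity)
      _ = 2 := by
          rw [← Real.rpow_mul (by norm_num : (0:ℝ) ≤ 2), mul_one_div, div_self hp0.ne',
            Real.rpow_one]
  -- final chain
  have hfinal : |(f a + f c) / 2 - (1 / T) * ∫ x in a..c, f x|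
      ≤ T / (2 * (p + 1) ^ (1/p)) * K := by
    rw [hId, abs_mul, abs_neg, abs_of_pos (by positivity : (0:ℝ) < 1/T)]
    calc 1/T * |∫ x in a..c, ((a+c)/2 - x) * f' x|
        ≤ 1/T * (K * (T^2/4)) := by
          apply mul_le_mul_of_nonneg_left _ (by positivity)
          calc |∫ x in a..c, ((a+c)/2 - x) * f' x|
              ≤ ∫ x in a..c, K * |(a+c)/2 - x| := habs1.trans habs2
            _ = K * (T^2/4) := habs3
      _ = T / 4 * K := by field_simp
      _ ≤ T / (2 * (p + 1) ^ (1/p)) * K := by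
          apply mul_le_mul_of_nonneg_right _ hK0
          apply div_le_div_of_nonneg_left hT0.le (by positivity)
          linarith
  rw [abs_of_pos hT0]
  exact hfinal
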